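/- arXiv:2305.17399 — 2 statements merged into one kernel-verified Lean document; each statement's English description precedes it below -/
import Mathlib

section
/- Let G be a multiplicative Lie algebra, and define M_0(G) = G, M_{n+1}(G) = (G⋆M_n(G))[G,M_n(G)], and Z_0(G) = {1}, Z_{n+1}(G) the preimage in G of Z(G/Z_n(G)), where Z(H) denotes LZ(H) ∩ Z(H) (Lie center intersect group center). Then M_n(G) = {1} for some n if and only if Z_n(G) = G for some n; more precisely, the lower central series terminates at {1} at step n if and only if the upper central series terminates at G at step n. -/
/-- A multiplicative Lie algebra (Ellis): a group `G` with a second binary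
operation `⋆` satisfying the five identities. `ˣy` denotes `x*y*x⁻¹`. -/
class MulLie (G : Type*) [Group G] where
  star : G → G → G
  star_self : ∀ x : G, star x x = 1
  star_mul_right : ∀ x y z : G, star x (y * z) = star x y * (y * star x z * y⁻¹)
  star_mul_left : ∀ x y z : G, star (x * y) z = (x * star y z * x⁻¹) * star x z
  jacobi : ∀ x y z : G,
    star (star x y) (y * z * y⁻¹) * star (star y z) (z * x * z⁻¹) *
      star (star z x) (x * y * x⁻¹) = 1
  conj_star : ∀ x y z : G, z * star x y * z⁻¹ = star (z * x * z⁻¹) (z * y * z⁻¹)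

open MulLie
open scoped commutatorElement

/-- The lower central series of a multiplicative Lie algebra:
`M₀(G) = G`, `M_{n+1}(G) = (G ⋆ Mₙ(G))[G, Mₙ(G)]`. -/
def Mser (G : Type*) [Group G] [MulLie G] : ℕ → Subgroup G
  | 0 => ⊤
  | n + 1 => Subgroup.closure
      {z : G | ∃ g m : G, m ∈ Mser G n ∧ (z = star g m ∨ z = ⁅g, m⁆)}

/-- The upper central series: `𝒵₀(G) = {1}`, and `𝒵_{n+1}(G)` is the preimage of
`𝒵(G/𝒵ₙ(G)) = LZ(G/𝒵ₙ(G)) ∩ Z(G/𝒵ₙ(G))`, i.e. the set of `x` such that for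
every `y`, both `x ⋆ y` and `[x, y]` lie in `𝒵ₙ(G)`. -/
def Zser (G : Type*) [Group G] [MulLie G] : ℕ → Set G
  | 0 => {1}
  | n + 1 => {x : G | ∀ y : G, star x y ∈ Zser G n ∧ ⁅x, y⁆ ∈ Zser G n}

section Aux
variable {G : Type*} [Group G] [MulLie G]

lemma star_antisymm (x y : G) : star x y = (star y x)⁻¹ := by
  have h := star_self (x * y)
  rw [star_mul_left, star_mul_right, star_mul_right, star_self, star_self] at h
  simp at h
  exact (inv_eq_of_mul_eq_one_right h).symm

lemma star_one_left (y : G) : star (1 : G) y = 1 := by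
  have h := star_mul_left (1 : G) 1 y
  simpa using h

lemma star_inv_left (x y : G) : star x⁻¹ y = x⁻¹ * (star x y)⁻¹ * x := by
  have h := star_mul_left x⁻¹ x y
  rw [inv_mul_cancel, star_one_left] at h
  rw [inv_inv] at h
  rw [← inv_eq_of_mul_eq_one_right h.symm]
  group

lemma star_conj (g x y : G) :
    star (g * x * g⁻¹) y = g * star x (g⁻¹ * y * g) * g⁻¹ := by
  have h := conj_star x (g⁻¹ * y * g) g
  rw [h]
  congr 1
  group

lemma commutator_conj (g x y : G) :
    ⁅g * x * g⁻¹, y⁆ = g * ⁅x, g⁻¹ * y * g⁆ * g⁻¹ := by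
  simp only [commutatorElement_def]; group

lemma commutator_mul_left (x x' y : G) :
    ⁅x * x', y⁆ = x * ⁅x', y⁆ * x⁻¹ * ⁅x, y⁆ := by
  simp only [commutatorElement_def]; group

lemma commutator_inv_left (x y : G) :
    ⁅x⁻¹, y⁆ = x⁻¹ * ⁅x, y⁆⁻¹ * x := by
  simp only [commutatorElement_def]; group

/-- `Zser G n` is closed under the group operations and under conjugation. -/
lemma zser_props (G : Type*) [Group G] [MulLie G] (n : ℕ) :
    (1 : G) ∈ Zser G n ∧
    (∀ x ∈ Zser G n, ∀ y ∈ Zser G n, x * y ∈ Zser G n) ∧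
    (∀ x ∈ Zser G n, x⁻¹ ∈ Zser G n) ∧
    (∀ x ∈ Zser G n, ∀ g : G, g * x * g⁻¹ ∈ Zser G n) := by
  induction n with
  | zero =>
      refine ⟨rfl, ?_, ?_, ?_⟩ <;> simp [Zser]
  | succ n ih =>
      obtain ⟨h1, hmul, hinv, hconj⟩ := ih
      have mem : ∀ x : G, x ∈ Zser G (n + 1) ↔
          ∀ y : G, star x y ∈ Zser G n ∧ ⁅x, y⁆ ∈ Zser G n := fun x => Iff.rfl
      refine ⟨?_, ?_, ?_, ?_⟩
      · rw [mem]
        intro y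
        constructor
        · rw [star_one_left]; exact h1
        · simpa using h1
      · intro x hx x' hx' ; rw [mem] at *
        intro y
        constructor
        · rw [star_mul_left]
          exact hmul _ (hconj _ (hx' y).1 x) _ (hx y).1
        · rw [commutator_mul_left]
          exact hmul _ (hconj _ (hx' y).2 x) _ (hx y).2
      · intro x hx; rw [mem] at *
        intro y
        constructor
        · rw [star_inv_left]
          have := hconj _ (hinv _ (hx y).1) x⁻¹
          simpa using this
        · rw [commutator_inv_left]
          have := hconj _ (hinv _ (hx y).2) x⁻¹
          simpa using this
      · intro x hx g; rw [mem] at *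
        intro y
        constructor
        · rw [star_conj]
          exact hconj _ (hx _).1 g
        · rw [commutator_conj]
          exact hconj _ (hx _).2 g

/-- `Zser G n` as a subgroup. -/
def Zsub (G : Type*) [Group G] [MulLie G] (n : ℕ) : Subgroup G where
  carrier := Zser G n
  one_mem' := (zser_props G n).1
  mul_mem' hx hy := (zser_props G n).2.1 _ hx _ hy
  inv_mem' hx := (zser_props G n).2.2.1 _ hx

lemma step1 (m k : ℕ) (h : (Mser G k : Set G) ⊆ Zser G (m + 1)) :
    (Mser G (k + 1) : Set G) ⊆ Zser G m := by
  have : Mser G (k + 1) ≤ Zsub G m := by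
    rw [Mser, Subgroup.closure_le]
    rintro z ⟨g, w, hw, hz | hz⟩
    · have := (h hw g).1
      rw [hz, star_antisymm]
      exact (Zsub G m).inv_mem this
    · have := (h hw g).2
      rw [hz, ← commutatorElement_inv]
      exact (Zsub G m).inv_mem this
  exact this

lemma step2 (m k : ℕ) (h : (Mser G (k + 1) : Set G) ⊆ Zser G m) :
    (Mser G k : Set G) ⊆ Zser G (m + 1) := by
  intro x hx
  intro y
  have hgen : ∀ z : G, (∃ g w : G, w ∈ Mser G k ∧ (z = star g w ∨ z = ⁅g, w⁆)) →
      z ∈ Zser G m := fun z hz => h (Subgroup.subset_closure hz)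
  constructor
  · rw [star_antisymm]
    exact (Zsub G m).inv_mem (hgen _ ⟨y, x, hx, Or.inl rfl⟩)
  · rw [← commutatorElement_inv]
    exact (Zsub G m).inv_mem (hgen _ ⟨y, x, hx, Or.inr rfl⟩)

lemma dir1 (n k : ℕ) (h : (Mser G k : Set G) ⊆ Zser G n) :
    (Mser G (k + n) : Set G) ⊆ Zser G 0 := by
  induction n generalizing k with
  | zero => simpa using h
  | succ n ih =>
      have := ih (k + 1) (step1 n k h)
      have e : k + 1 + n = k + (n + 1) := by omega
      rwa [e] at this

lemma dir2 (m k : ℕ) (h : (Mser G (k + m) : Set G) ⊆ Zser G 0) :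
    (Mser G k : Set G) ⊆ Zser G m := by
  induction m generalizing k with
  | zero => simpa using h
  | succ m ih =>
      apply step2
      apply ih (k + 1)
      have : k + 1 + m = k + (m + 1) := by omega
      rw [this]; exact h

end Aux

/-- The lower central series of `G` terminates at `{1}` at the `n`-th step
if and only if the upper central series terminates at `G` at the `n`-th step. -/
theorem lower_central_bot_iff_upper_central_top
    (G : Type*) [Group G] [MulLie G] (n : ℕ) :
    Mser G n = ⊥ ↔ Zser G n = Set.univ := by
  constructor
  · intro h
    have h0 : (Mser G (0 + n) : Set G) ⊆ Zser G 0 := by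
      rw [Nat.zero_add, h]
      intro x hx
      simpa [Zser] using hx
    have := dir2 n 0 h0
    have htop : (Mser G 0 : Set G) = Set.univ := by simp [Mser]
    rw [htop] at this
    exact Set.eq_univ_of_univ_subset this
  · intro h
    have h0 : (Mser G 0 : Set G) ⊆ Zser G n := by
      rw [h]; exact Set.subset_univ _
    have := dir1 n 0 h0
    rw [Nat.zero_add] at this
    rw [eq_bot_iff]
    intro x hx
    have hx1 : x ∈ ({1} : Set G) := this hx
    simpa using hx1
end

section
/- The direct product of finitely many M𝒵-nilpotent multiplicative Lie algebras is M𝒵-nilpotent. -/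
open MulLie
open scoped commutatorElement

/-- The coordinatewise multiplicative Lie algebra structure on a direct
product. -/
instance Pi.mulLie {ι : Type*} (G : ι → Type*) [∀ i, Group (G i)]
    [∀ i, MulLie (G i)] : MulLie (∀ i, G i) where
  star f g := fun i => star (f i) (g i)
  star_self f := funext fun i => star_self (f i)
  star_mul_right f g h := funext fun i => star_mul_right (f i) (g i) (h i)
  star_mul_left f g h := funext fun i => star_mul_left (f i) (g i) (h i)
  jacobi f g h := funext fun i => jacobi (f i) (g i) (h i)
  conj_star f g h := funext fun i => conj_star (f i) (g i) (h i)

lemma star_one' {G : Type*} [Group G] [MulLie G] (x : G) : star x (1 : G) = 1 := by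
  have h := star_mul_right x 1 1
  simp only [mul_one, one_mul] at h
  have h2 : star x (1:G) * 1 = star x 1 * star x 1 := by
    rw [mul_one]; simpa using h
  exact (mul_left_cancel h2).symm

lemma Mser_bot_succ {G : Type*} [Group G] [MulLie G] {n : ℕ}
    (h : Mser G n = ⊥) : Mser G (n + 1) = ⊥ := by
  rw [Mser]
  rw [eq_bot_iff]
  apply Subgroup.closure_le (K := (⊥ : Subgroup G)) |>.2
  rintro z ⟨g, m, hm, hz | hz⟩ <;>
  · rw [h, Subgroup.mem_bot] at hm
    subst hm
    simp [hz, star_one', commutatorElement_def]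

lemma Mser_bot_of_le {G : Type*} [Group G] [MulLie G] {n N : ℕ}
    (h : Mser G n = ⊥) (hle : n ≤ N) : Mser G N = ⊥ := by
  induction N with
  | zero => exact (Nat.le_zero.mp hle) ▸ h
  | succ k ih =>
    rcases Nat.lt_or_ge n (k + 1) with hlt | hge
    · exact Mser_bot_succ (ih (Nat.lt_succ_iff.mp hlt))
    · have : n = k + 1 := le_antisymm hle hge
      exact this ▸ h

lemma Mser_pi_le {ι : Type*} (G : ι → Type*) [∀ i, Group (G i)]
    [∀ i, MulLie (G i)] (n : ℕ) :
    Mser (∀ i, G i) n ≤ Subgroup.pi Set.univ (fun i => Mser (G i) n) := by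
  induction n with
  | zero =>
    simp only [Mser]
    intro f _ i _
    trivial
  | succ k ih =>
    rw [Mser]
    apply Subgroup.closure_le _ |>.2
    rintro z ⟨g, m, hm, hz | hz⟩ <;> subst hz <;>
    · intro i _
      have hmi : m i ∈ Mser (G i) k := ih hm i trivial
      show _ ∈ Mser (G i) (k+1)
      rw [Mser]
      apply Subgroup.subset_closure
      exact ⟨g i, m i, hmi, by tauto⟩

/-- The direct product of finitely many `M𝒵`-nilpotent multiplicative Lie
algebras is `M𝒵`-nilpotent. -/
theorem pi_MZnilpotent {ι : Type*} [Finite ι] (G : ι → Type*)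
    [∀ i, Group (G i)] [∀ i, MulLie (G i)]
    (hnil : ∀ i, ∃ n : ℕ, Mser (G i) n = ⊥) :
    ∃ n : ℕ, Mser (∀ i, G i) n = ⊥ := by
  choose n hn using hnil
  obtain ⟨N, hN⟩ := Finite.exists_le n
  refine ⟨N, eq_bot_iff.2 fun f hf => ?_⟩
  have := Mser_pi_le G N hf
  rw [Subgroup.mem_bot]
  funext i
  have hi : f i ∈ Mser (G i) N := this i trivial
  rw [Mser_bot_of_le (hn i) (hN i), Subgroup.mem_bot] at hi
  exact hi
end
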